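/- (Strawderman-Berger marginal density, case a = 1, b = 1/2, φ = 1.) For every real β, ∫₀¹ normalPDF(0, 1/ρ − 1)(β) · f(ρ; 1, 1/2, 1) dρ = 1/√(2π) − (|β|/2) e^(β²/2) + (β/2) e^(β²/2) Erf(β/√2), where Erf(x) = (2/√π) ∫₀^x e^(−t²) dt is the error function. -/

import Mathlib

open MeasureTheory Real

/-- The three-parameter beta (TPB) density with parameters `a`, `b`, `φ`. -/
noncomputable def tpb (a b φ x : ℝ) : ℝ :=
  (Real.Gamma (a + b) / (Real.Gamma a * Real.Gamma b)) * φ ^ b * x ^ (b - 1) *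
    (1 - x) ^ (a - 1) * (1 + (φ - 1) * x) ^ (-(a + b))

/-- The centered normal density with variance `v`. -/
noncomputable def normalPDF (v θ : ℝ) : ℝ :=
  (2 * Real.pi * v) ^ (-(1 : ℝ) / 2) * Real.exp (-θ ^ 2 / (2 * v))

/-- The error function Erf(x) = (2/√π) ∫₀^x e^(−t²) dt. -/
noncomputable def erf (x : ℝ) : ℝ := 2 / Real.sqrt Real.pi * ∫ t in (0 : ℝ)..x, Real.exp (-t ^ 2)

open Set Filter Topology

lemma erf_hasDerivAt (x : ℝ) :
    HasDerivAt erf (2 / Real.sqrt π * Real.exp (-x ^ 2)) x := by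
  have h : Continuous fun t : ℝ => Real.exp (-t ^ 2) := by continuity
  exact ((h.integral_hasStrictDerivAt 0 x).hasDerivAt).const_mul _

lemma gaussIntegrableIoi : IntegrableOn (fun t : ℝ => Real.exp (-t ^ 2)) (Ioi 0) := by
  have := (integrable_exp_neg_mul_sq (b := 1) one_pos).integrableOn (s := Ioi 0)
  simpa using this

lemma erf_tendsto_one : Tendsto erf atTop (𝓝 1) := by
  have h := intervalIntegral_tendsto_integral_Ioi 0 gaussIntegrableIoi tendsto_id
  have h2 : (∫ t in Ioi (0:ℝ), Real.exp (-t ^ 2)) = Real.sqrt π / 2 := by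
    have := integral_gaussian_Ioi 1
    simpa using this
  rw [h2] at h
  have h3 := h.const_mul (2 / Real.sqrt π)
  have hπ : Real.sqrt π ≠ 0 := by positivity
  have h4 : 2 / Real.sqrt π * (Real.sqrt π / 2) = 1 := by field_simp
  rw [h4] at h3
  exact h3

lemma erf_neg (x : ℝ) : erf (-x) = - erf x := by
  unfold erf
  have : ∫ t in (0:ℝ)..(-x), Real.exp (-t ^ 2) = ∫ t in (0:ℝ)..(-x), Real.exp (-(-t) ^ 2) := by
    simp
  rw [this, intervalIntegral.integral_comp_neg (fun t => Real.exp (-t ^ 2)),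
    neg_neg, neg_zero, intervalIntegral.integral_symm]
  ring

lemma erf_zero : erf 0 = 0 := by simp [erf]

lemma key_integral {c : ℝ} (hc : 0 ≤ c) :
    ∫ s in Ioi (1:ℝ), (s ^ 2)⁻¹ * Real.exp (-(c * s ^ 2)) =
      Real.exp (-c) + Real.sqrt (c * π) * (erf (Real.sqrt c) - 1) := by
  set G : ℝ → ℝ := fun s =>
    -(Real.exp (-(c * s ^ 2)) * s⁻¹) - Real.sqrt (c * π) * erf (Real.sqrt c * s) with hG
  have hπ : Real.sqrt π ≠ 0 := by positivity
  have hderiv0 : ∀ s : ℝ, s ≠ 0 → HasDerivAt G ((s ^ 2)⁻¹ * Real.exp (-(c * s ^ 2))) s := by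
    intro s hs0
    have h1 : HasDerivAt (fun s : ℝ => -(c * s ^ 2)) (-(c * (2 * s))) s := by
      have := ((hasDerivAt_pow 2 s).const_mul c).fun_neg
      simpa using this
    have hexp := h1.exp
    have hinv := hasDerivAt_inv hs0
    have hmul := hexp.mul hinv
    have hlin : HasDerivAt (fun s : ℝ => Real.sqrt c * s) (Real.sqrt c) s := by
      simpa using (hasDerivAt_id s).const_mul (Real.sqrt c)
    have herf := (erf_hasDerivAt (Real.sqrt c * s)).comp s hlin
    have htot := (hmul.fun_neg).fun_sub (herf.const_mul (Real.sqrt c * Real.sqrt π))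
    have hcc : Real.sqrt c * Real.sqrt c = c := Real.mul_self_sqrt hc
    have hsq : (Real.sqrt c * s) ^ 2 = c * s ^ 2 := by rw [mul_pow]; rw [sq_sqrt hc]
    rw [hG]
    have hsp : Real.sqrt (c * π) = Real.sqrt c * Real.sqrt π := Real.sqrt_mul hc _
    convert htot using 1
    · rfl
    · rfl
    · funext y; rw [hsp]; rfl
    · rw [hsq]
      have h2 : Real.sqrt c * Real.sqrt π *
          (2 / Real.sqrt π * Real.exp (-(c * s ^ 2)) * Real.sqrt c)
          = 2 * c * Real.exp (-(c * s ^ 2)) := by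
        field_simp
        linear_combination hcc
      rw [h2]
      field_simp
      ring
  have hderiv : ∀ s ∈ Ioi (1:ℝ), HasDerivAt G ((s ^ 2)⁻¹ * Real.exp (-(c * s ^ 2))) s :=
    fun s hs => hderiv0 s (by simp only [mem_Ioi] at hs; linarith)
  have hcont : ContinuousWithinAt G (Ici (1:ℝ)) 1 :=
    ((hderiv0 1 one_ne_zero).continuousAt.continuousWithinAt)
  have hint : IntegrableOn (fun s : ℝ => (s ^ 2)⁻¹ * Real.exp (-(c * s ^ 2))) (Ioi 1) := by
    have hbase : IntegrableOn (fun t : ℝ => t ^ (-2 : ℝ)) (Ioi (1:ℝ)) :=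
      integrableOn_Ioi_rpow_of_lt (by norm_num) one_pos
    have hbase' : IntegrableOn (fun t : ℝ => (t ^ 2)⁻¹) (Ioi (1:ℝ)) := by
      refine hbase.congr_fun (fun t ht => ?_) measurableSet_Ioi
      have ht0 : (0:ℝ) < t := lt_trans one_pos ht
      rw [show (-2 : ℝ) = -((2:ℕ):ℝ) by norm_num]
      beta_reduce
      rw [Real.rpow_neg ht0.le, Real.rpow_natCast]
    refine hbase'.mono' ?_ ?_
    · exact ((measurable_id.pow_const 2).inv.mul (by measurability)).aestronglyMeasurable
    · filter_upwards [ae_restrict_mem measurableSet_Ioi] with t ht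
      have ht0 : (0:ℝ) < t := lt_trans one_pos ht
      have he : Real.exp (-(c * t ^ 2)) ≤ 1 := by
        apply Real.exp_le_one_iff.2; nlinarith
      rw [norm_mul, norm_inv]
      have h1 : ‖t ^ 2‖ = t ^ 2 := by rw [Real.norm_eq_abs, abs_of_pos (by positivity)]
      have h2 : ‖Real.exp (-(c * t ^ 2))‖ = Real.exp (-(c * t ^ 2)) := by
        rw [Real.norm_eq_abs, abs_of_pos (Real.exp_pos _)]
      rw [h1, h2]
      calc (t ^ 2)⁻¹ * Real.exp (-(c * t ^ 2)) ≤ (t ^ 2)⁻¹ * 1 := by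
            apply mul_le_mul_of_nonneg_left he (by positivity)
        _ = (t ^ 2)⁻¹ := mul_one _
  have htend : Tendsto G atTop (𝓝 (-(0:ℝ) - Real.sqrt (c * π) * 1)) := by
    have t1 : Tendsto (fun s : ℝ => Real.exp (-(c * s ^ 2)) * s⁻¹) atTop (𝓝 0) := by
      apply squeeze_zero' (g := fun s : ℝ => s⁻¹)
      · filter_upwards [eventually_gt_atTop (0:ℝ)] with s hs
        positivity
      · filter_upwards [eventually_gt_atTop (0:ℝ)] with s hs
        have he : Real.exp (-(c * s ^ 2)) ≤ 1 := by
          apply Real.exp_le_one_iff.2; nlinarith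
        calc Real.exp (-(c * s ^ 2)) * s⁻¹ ≤ 1 * s⁻¹ := by
              apply mul_le_mul_of_nonneg_right he (by positivity)
          _ = s⁻¹ := one_mul _
      · exact tendsto_inv_atTop_zero
    have t2 : Tendsto (fun s : ℝ => Real.sqrt (c * π) * erf (Real.sqrt c * s)) atTop
        (𝓝 (Real.sqrt (c * π) * 1)) := by
      rcases eq_or_lt_of_le hc with h0 | h0
      · simp [← h0, erf_zero]
      · have harg : Tendsto (fun s : ℝ => Real.sqrt c * s) atTop atTop :=
          Tendsto.const_mul_atTop (Real.sqrt_pos.2 h0) tendsto_id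
        exact (erf_tendsto_one.comp harg).const_mul _
    exact (t1.neg).sub t2
  have := integral_Ioi_of_hasDerivAt_of_tendsto hcont hderiv hint htend
  rw [this, hG]
  simp
  ring

lemma tpb_eval {x : ℝ} (hx : 0 < x) : tpb 1 (1/2) 1 x = (2 * Real.sqrt x)⁻¹ := by
  have hΓ : Real.Gamma (1 + 1/2) = (1/2) * Real.Gamma (1/2) := by
    rw [show (1 + 1/2 : ℝ) = 1/2 + 1 by norm_num, Real.Gamma_add_one (by norm_num)]
  have hΓ2 : Real.Gamma (1/2) = Real.sqrt π := Real.Gamma_one_half_eq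
  have hπ : Real.sqrt π ≠ 0 := by positivity
  have hxr : x ^ ((1:ℝ)/2 - 1) = (Real.sqrt x)⁻¹ := by
    rw [show ((1:ℝ)/2 - 1) = -(1/2) by norm_num, Real.rpow_neg hx.le, ← Real.sqrt_eq_rpow]
  have hs : Real.sqrt x ≠ 0 := by positivity
  unfold tpb
  rw [hΓ, Real.Gamma_one, hΓ2, hxr]
  norm_num
  field_simp

lemma normalPDF_eval {v : ℝ} (hv : 0 < v) (θ : ℝ) :
    normalPDF v θ = (Real.sqrt (2 * π * v))⁻¹ * Real.exp (-θ ^ 2 / (2 * v)) := by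
  unfold normalPDF
  rw [neg_div, Real.rpow_neg (by positivity), ← Real.sqrt_eq_rpow]

lemma himg : (fun s : ℝ => 1 - (s ^ 2)⁻¹) '' Ioi 1 = Ioo (0:ℝ) 1 := by
  ext ρ
  simp only [mem_image, mem_Ioi, mem_Ioo]
  constructor
  · rintro ⟨s, hs, rfl⟩
    have hs2 : 1 < s ^ 2 := by nlinarith
    have h1 : (0:ℝ) < (s ^ 2)⁻¹ := by positivity
    have h2 : (s ^ 2)⁻¹ < 1 := by
      rw [inv_lt_one_iff₀]; right; exact hs2
    constructor <;> linarith
  · rintro ⟨h0, h1⟩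
    have hu0 : 0 < Real.sqrt (1 - ρ) := Real.sqrt_pos.2 (by linarith)
    have hu1 : Real.sqrt (1 - ρ) < 1 := by
      rw [Real.sqrt_lt' one_pos]; nlinarith
    refine ⟨(Real.sqrt (1 - ρ))⁻¹, ?_, ?_⟩
    · exact (one_lt_inv₀ hu0).2 hu1
    · rw [inv_pow, inv_inv, Real.sq_sqrt (by linarith)]
      ring

lemma pointwise (β : ℝ) {s : ℝ} (hs : 1 < s) :
    |2 * s / (s ^ 2) ^ 2| •
        (normalPDF (1 / (1 - (s ^ 2)⁻¹) - 1) β * tpb 1 (1/2) 1 (1 - (s ^ 2)⁻¹)) =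
      (Real.sqrt (2 * π))⁻¹ * Real.exp (β ^ 2 / 2) *
        ((s ^ 2)⁻¹ * Real.exp (-(β ^ 2 / 2 * s ^ 2))) := by
  have hs0 : 0 < s := lt_trans one_pos hs
  have hs2 : 1 < s ^ 2 := by nlinarith
  have hs2' : (0:ℝ) < s ^ 2 - 1 := by linarith
  have hA : (s ^ 2 : ℝ) ≠ 0 := by positivity
  have hB : (s ^ 2 - 1 : ℝ) ≠ 0 := ne_of_gt hs2'
  have hinv : (s ^ 2)⁻¹ < 1 := by rw [inv_lt_one_iff₀]; right; exact hs2
  have hρ0 : 0 < 1 - (s ^ 2)⁻¹ := by linarith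
  have hv : 1 / (1 - (s ^ 2)⁻¹) - 1 = (s ^ 2 - 1)⁻¹ := by
    rw [div_sub' (ne_of_gt hρ0)]
    rw [show 1 - (1 - (s ^ 2)⁻¹) * 1 = (s ^ 2)⁻¹ by ring]
    rw [show 1 - (s ^ 2)⁻¹ = (s ^ 2 - 1) / s ^ 2 by field_simp]
    field_simp
  rw [hv, normalPDF_eval (by positivity), tpb_eval hρ0]
  have hρeq : 1 - (s ^ 2)⁻¹ = (s ^ 2 - 1) / s ^ 2 := by field_simp
  rw [hρeq, Real.sqrt_div hs2'.le, Real.sqrt_sq hs0.le]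
  rw [show 2 * π * (s ^ 2 - 1)⁻¹ = (2 * π) / (s ^ 2 - 1) by ring,
    Real.sqrt_div (by positivity)]
  have hexp : -β ^ 2 / (2 * (s ^ 2 - 1)⁻¹) = β ^ 2 / 2 + -(β ^ 2 / 2 * s ^ 2) := by
    field_simp; ring
  rw [hexp, Real.exp_add, smul_eq_mul, abs_of_pos (by positivity)]
  have h1 : Real.sqrt (2 * π) ≠ 0 := by positivity
  have h2 : Real.sqrt (s ^ 2 - 1) ≠ 0 := by positivity
  field_simp

/-- Strawderman-Berger marginal density, case a = 1, b = 1/2, φ = 1. -/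
theorem strawderman_berger_marginal_density (β : ℝ) :
    ∫ ρ in Set.Ioo (0 : ℝ) 1, normalPDF (1 / ρ - 1) β * tpb 1 (1 / 2) 1 ρ =
      1 / Real.sqrt (2 * Real.pi) - (|β| / 2) * Real.exp (β ^ 2 / 2) +
        (β / 2) * Real.exp (β ^ 2 / 2) * erf (β / Real.sqrt 2) := by
  have hd : ∀ s ∈ Ioi (1:ℝ), HasDerivWithinAt (fun s : ℝ => 1 - (s ^ 2)⁻¹)
      (2 * s / (s ^ 2) ^ 2) (Ioi 1) s := by
    intro s hs
    have hs0 : s ≠ 0 := by simp only [mem_Ioi] at hs; nlinarith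
    have h0 := ((hasDerivAt_pow 2 s).inv (pow_ne_zero 2 hs0)).const_sub 1
    have : HasDerivAt (fun s : ℝ => 1 - (s ^ 2)⁻¹) (2 * s / (s ^ 2) ^ 2) s := by
      convert h0 using 1
      · rfl
      · rfl
      norm_num
      ring
    exact this.hasDerivWithinAt
  have hinj : InjOn (fun s : ℝ => 1 - (s ^ 2)⁻¹) (Ioi 1) := by
    intro a ha b hb h
    simp only [mem_Ioi] at ha hb
    simp only at h
    have h' : (a ^ 2)⁻¹ = (b ^ 2)⁻¹ := by linarith
    have h'' : a ^ 2 = b ^ 2 := inv_injective h'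
    have h3 : (a - b) * (a + b) = 0 := by linear_combination h''
    rcases mul_eq_zero.mp h3 with h4 | h4
    · linarith
    · linarith
  have hsub := integral_image_eq_integral_abs_deriv_smul measurableSet_Ioi hd hinj
      (fun ρ => normalPDF (1 / ρ - 1) β * tpb 1 (1 / 2) 1 ρ)
  rw [himg] at hsub
  rw [hsub]
  rw [setIntegral_congr_fun measurableSet_Ioi (fun s hs => pointwise β hs)]
  rw [integral_const_mul]
  rw [key_integral (show (0:ℝ) ≤ β ^ 2 / 2 by positivity)]
  -- algebra
  have hee : Real.exp (β ^ 2 / 2) * Real.exp (-(β ^ 2 / 2)) = 1 := by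
    rw [← Real.exp_add]; simp
  have hsc : Real.sqrt (β ^ 2 / 2) = |β| / Real.sqrt 2 := by
    rw [Real.sqrt_div (sq_nonneg β), Real.sqrt_sq_eq_abs]
  have hscπ : Real.sqrt (β ^ 2 / 2 * π) = |β| / Real.sqrt 2 * Real.sqrt π := by
    rw [Real.sqrt_mul (by positivity), hsc]
  have h2π : Real.sqrt (2 * π) = Real.sqrt 2 * Real.sqrt π := Real.sqrt_mul (by norm_num) π
  have h22 : Real.sqrt 2 * Real.sqrt 2 = 2 := Real.mul_self_sqrt (by norm_num)
  have hπ0 : Real.sqrt π ≠ 0 := by positivity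
  have h20 : Real.sqrt 2 ≠ 0 := by positivity
  have key2 : (Real.sqrt (2 * π))⁻¹ * Real.sqrt (β ^ 2 / 2 * π) = |β| / 2 := by
    rw [h2π, hscπ]
    rw [show (Real.sqrt 2 * Real.sqrt π)⁻¹ * (|β| / Real.sqrt 2 * Real.sqrt π)
        = |β| * (Real.sqrt π * (Real.sqrt π)⁻¹) * (Real.sqrt 2 * Real.sqrt 2)⁻¹ by ring]
    rw [mul_inv_cancel₀ hπ0, h22]
    norm_num
    ring
  calc (Real.sqrt (2 * π))⁻¹ * Real.exp (β ^ 2 / 2) *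
        (Real.exp (-(β ^ 2 / 2)) + Real.sqrt (β ^ 2 / 2 * π) * (erf (Real.sqrt (β ^ 2 / 2)) - 1))
      = (Real.sqrt (2 * π))⁻¹ * (Real.exp (β ^ 2 / 2) * Real.exp (-(β ^ 2 / 2))) +
        ((Real.sqrt (2 * π))⁻¹ * Real.sqrt (β ^ 2 / 2 * π)) *
          (Real.exp (β ^ 2 / 2) * (erf (Real.sqrt (β ^ 2 / 2)) - 1)) := by ring
    _ = (Real.sqrt (2 * π))⁻¹ +
        (|β| / 2) * (Real.exp (β ^ 2 / 2) * (erf (|β| / Real.sqrt 2) - 1)) := by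
        rw [hee, key2, hsc]; ring
    _ = 1 / Real.sqrt (2 * Real.pi) - (|β| / 2) * Real.exp (β ^ 2 / 2) +
        (β / 2) * Real.exp (β ^ 2 / 2) * erf (β / Real.sqrt 2) := by
        rcases abs_cases β with ⟨habs, hsign⟩ | ⟨habs, hsign⟩
        · rw [habs]; rw [one_div]; ring
        · rw [habs, show -β / Real.sqrt 2 = -(β / Real.sqrt 2) from neg_div _ _,
            erf_neg, one_div]; ring
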